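/- Let k be odd and let G be a connected k-uniform hypergraph on {1,…,n} with at least one edge. Then a nonzero real vector x ∈ ℝ^n satisfies ((D−A) x^{k−1})_i = 0 for all i if and only if x is a nonzero constant vector, i.e., there exists γ ∈ ℝ, γ ≠ 0, with x_i = γ for all i. Consequently, up to real scaling the all-ones vector is the unique real eigenvector of the Laplacian tensor of G associated with the eigenvalue zero. -/
import Mathlib


open Finset

/-- Degree of vertex `i` in the hypergraph with edge set `E`. -/
def hdeg {n : ℕ} (E : Finset (Finset (Fin n))) (i : Fin n) : ℕ :=
  (E.filter fun e => i ∈ e).card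

/-- Laplacian tensor action `((D - A) x^{k-1})_i` over ℂ. -/
noncomputable def lapC (k : ℕ) {n : ℕ} (E : Finset (Finset (Fin n)))
    (x : Fin n → ℂ) (i : Fin n) : ℂ :=
  (hdeg E i : ℂ) * x i ^ (k - 1) -
    ∑ e ∈ E.filter (fun e => i ∈ e), ∏ j ∈ e.erase i, x j

/-- Signless Laplacian tensor action `((D + A) x^{k-1})_i` over ℂ. -/
noncomputable def slapC (k : ℕ) {n : ℕ} (E : Finset (Finset (Fin n)))
    (x : Fin n → ℂ) (i : Fin n) : ℂ :=
  (hdeg E i : ℂ) * x i ^ (k - 1) +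
    ∑ e ∈ E.filter (fun e => i ∈ e), ∏ j ∈ e.erase i, x j

/-- Laplacian tensor action `((D - A) x^{k-1})_i` over ℝ. -/
noncomputable def lapR (k : ℕ) {n : ℕ} (E : Finset (Finset (Fin n)))
    (x : Fin n → ℝ) (i : Fin n) : ℝ :=
  (hdeg E i : ℝ) * x i ^ (k - 1) -
    ∑ e ∈ E.filter (fun e => i ∈ e), ∏ j ∈ e.erase i, x j

/-- Signless Laplacian tensor action `((D + A) x^{k-1})_i` over ℝ. -/
noncomputable def slapR (k : ℕ) {n : ℕ} (E : Finset (Finset (Fin n)))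
    (x : Fin n → ℝ) (i : Fin n) : ℝ :=
  (hdeg E i : ℝ) * x i ^ (k - 1) +
    ∑ e ∈ E.filter (fun e => i ∈ e), ∏ j ∈ e.erase i, x j

/-- The hypergraph with edge set `E` is connected: every pair of distinct vertices is
joined by a chain of edges with consecutive edges intersecting. -/
def HConnected {n : ℕ} (E : Finset (Finset (Fin n))) : Prop :=
  ∀ i j : Fin n, i ≠ j → ∃ m : ℕ, ∃ es : Fin (m + 1) → Finset (Fin n),
    (∀ r, es r ∈ E) ∧ i ∈ es 0 ∧ j ∈ es (Fin.last m) ∧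
    ∀ r : Fin m, (es r.castSucc ∩ es r.succ).Nonempty

lemma propagate_aux {n : ℕ} {E : Finset (Finset (Fin n))} (hconn : HConnected E)
    (P : Fin n → Prop) (h : ∀ e ∈ E, (∃ i ∈ e, P i) → ∀ j ∈ e, P j)
    {i : Fin n} (hi : P i) (j : Fin n) : P j := by
  by_cases hij : i = j
  · exact hij ▸ hi
  obtain ⟨m, es, hes, hi0, hjl, hint⟩ := hconn i j hij
  have key : ∀ t, ∀ ht : t < m + 1, ∀ v ∈ es ⟨t, ht⟩, P v := by
    intro t
    induction t with
    | zero =>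
      intro ht v hv
      have h0 : es ⟨0, ht⟩ = es 0 := by congr 1
      rw [h0] at hv
      exact h _ (hes _) ⟨i, hi0, hi⟩ v hv
    | succ t ih =>
      intro ht v hv
      have htm : t < m := by omega
      obtain ⟨w, hw⟩ := hint ⟨t, htm⟩
      rw [Finset.mem_inter] at hw
      have hc : es (Fin.castSucc ⟨t, htm⟩) = es ⟨t, by omega⟩ := by congr 1
      have hs : es (Fin.succ ⟨t, htm⟩) = es ⟨t + 1, ht⟩ := by congr 1
      rw [hc] at hw
      rw [hs] at hw
      have hPw : P w := ih (by omega) w hw.1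
      exact h _ (hes _) ⟨w, hw.2, hPw⟩ v hv
  have hl : es (Fin.last m) = es ⟨m, Nat.lt_succ_self m⟩ := by congr 1
  rw [hl] at hjl
  exact key m (Nat.lt_succ_self m) j hjl

set_option maxHeartbeats 800000 in
theorem stmt_13 {n k : ℕ} (hk : 3 ≤ k) (hn : k ≤ n) (hkodd : Odd k)
    (E : Finset (Finset (Fin n))) (hE : ∀ e ∈ E, e.card = k)
    (hconn : HConnected E) (hne : E.Nonempty)
    (x : Fin n → ℝ) :
    (x ≠ 0 ∧ ∀ i, lapR k E x i = 0) ↔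
      ∃ γ : ℝ, γ ≠ 0 ∧ ∀ i, x i = γ := by
  have hn0 : 0 < n := by omega
  have hkeven : Even (k - 1) := by
    obtain ⟨c, hc⟩ := hkodd; exact ⟨c, by omega⟩
  have hcard_erase : ∀ e ∈ E, ∀ i ∈ e, (e.erase i).card = k - 1 := by
    intro e he i hi
    rw [Finset.card_erase_of_mem hi, hE e he]
  constructor
  · rintro ⟨hx0, hlap⟩
    -- the basic eigen-equation
    have heq : ∀ i : Fin n, (hdeg E i : ℝ) * x i ^ (k - 1) =
        ∑ e ∈ E.filter (fun e => i ∈ e), ∏ j ∈ e.erase i, x j := by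
      intro i
      have := hlap i
      unfold lapR at this
      linarith
    obtain ⟨i0, -, hmax⟩ := Finset.exists_max_image Finset.univ (fun v => |x v|)
      ⟨⟨0, hn0⟩, Finset.mem_univ _⟩
    set M : ℝ := |x i0| with hM
    have hmax' : ∀ v, |x v| ≤ M := fun v => hmax v (Finset.mem_univ v)
    have hMpos : 0 < M := by
      rcases Function.ne_iff.mp hx0 with ⟨v, hv⟩
      exact lt_of_lt_of_le (abs_pos.mpr hv) (hmax' v)
    -- Step 1: every vertex in an edge touching a max-modulus vertex has max modulus
    have hA : ∀ e ∈ E, (∃ i ∈ e, |x i| = M) → ∀ j ∈ e, |x j| = M := by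
      rintro e he ⟨i, hie, hiM⟩ j hje
      by_cases hji : j = i
      · exact hji ▸ hiM
      have hje' : j ∈ e.erase i := Finset.mem_erase.mpr ⟨hji, hje⟩
      set S := E.filter (fun e => i ∈ e) with hS
      have heS : e ∈ S := Finset.mem_filter.mpr ⟨he, hie⟩
      have hbound : ∀ e' ∈ S, |∏ j ∈ e'.erase i, x j| ≤ M ^ (k - 1) := by
        intro e' he'
        rw [Finset.mem_filter] at he'
        rw [Finset.abs_prod]
        calc ∏ j ∈ e'.erase i, |x j| ≤ ∏ j ∈ e'.erase i, M :=
              Finset.prod_le_prod (fun j _ => abs_nonneg _) (fun j _ => hmax' j)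
          _ = M ^ (k - 1) := by
              rw [Finset.prod_const, hcard_erase e' he'.1 i he'.2]
      have hsum_le : ∑ e' ∈ S, |∏ j ∈ e'.erase i, x j| ≤ ∑ e' ∈ S, M ^ (k - 1) :=
        Finset.sum_le_sum hbound
      have hsum_ge : ∑ e' ∈ S, M ^ (k - 1) ≤ ∑ e' ∈ S, |∏ j ∈ e'.erase i, x j| := by
        have h1 : ∑ e' ∈ S, M ^ (k - 1) = (hdeg E i : ℝ) * M ^ (k - 1) := by
          rw [Finset.sum_const, hdeg, nsmul_eq_mul]
        have h2 : (hdeg E i : ℝ) * M ^ (k - 1) = |(hdeg E i : ℝ) * x i ^ (k - 1)| := by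
          rw [abs_mul, abs_pow, abs_of_nonneg (by positivity : (0:ℝ) ≤ (hdeg E i : ℝ)), hiM]
        rw [h1, h2, heq i]
        exact Finset.abs_sum_le_sum_abs _ _
      have hall : ∀ e' ∈ S, |∏ j ∈ e'.erase i, x j| = M ^ (k - 1) :=
        (Finset.sum_eq_sum_iff_of_le hbound).mp (le_antisymm hsum_le hsum_ge)
      have hprod : ∏ j ∈ e.erase i, |x j| = M ^ (k - 1) := by
        rw [← Finset.abs_prod]; exact hall e heS
      by_contra hjM
      have hjlt : |x j| < M := lt_of_le_of_ne (hmax' j) hjM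
      have hrest : ∏ l ∈ (e.erase i).erase j, |x l| ≤ M ^ (k - 2) := by
        calc ∏ l ∈ (e.erase i).erase j, |x l| ≤ ∏ l ∈ (e.erase i).erase j, M :=
              Finset.prod_le_prod (fun l _ => abs_nonneg _) (fun l _ => hmax' l)
          _ = M ^ (k - 2) := by
              rw [Finset.prod_const, Finset.card_erase_of_mem hje',
                hcard_erase e he i hie]
              have h21 : k - 1 - 1 = k - 2 := by omega
              rw [h21]
      have hsplit : |x j| * ∏ l ∈ (e.erase i).erase j, |x l| = M ^ (k - 1) := by
        rw [Finset.mul_prod_erase (e.erase i) (fun l => |x l|) hje', hprod]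
      have hrestpos : 0 ≤ ∏ l ∈ (e.erase i).erase j, |x l| :=
        Finset.prod_nonneg (fun l _ => abs_nonneg _)
      have : M ^ (k - 1) < M ^ (k - 1) := by
        calc M ^ (k - 1) = |x j| * ∏ l ∈ (e.erase i).erase j, |x l| := hsplit.symm
          _ ≤ |x j| * M ^ (k - 2) := by
              apply mul_le_mul_of_nonneg_left hrest (abs_nonneg _)
          _ < M * M ^ (k - 2) := by
              apply mul_lt_mul_of_pos_right hjlt (by positivity)
          _ = M ^ (k - 1) := by
              rw [← pow_succ']; congr 1; omega
      exact absurd this (lt_irrefl _)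
    -- all moduli equal M
    have habs : ∀ v, |x v| = M := propagate_aux hconn _ hA rfl
    -- Step 2: every product over e.erase i equals M^(k-1)
    have hB : ∀ i : Fin n, ∀ e ∈ E, i ∈ e → ∏ j ∈ e.erase i, x j = M ^ (k - 1) := by
      intro i e he hie
      set S := E.filter (fun e => i ∈ e) with hS
      have hbound : ∀ e' ∈ S, ∏ j ∈ e'.erase i, x j ≤ M ^ (k - 1) := by
        intro e' he'
        rw [Finset.mem_filter] at he'
        calc ∏ j ∈ e'.erase i, x j ≤ |∏ j ∈ e'.erase i, x j| := le_abs_self _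
          _ = ∏ j ∈ e'.erase i, |x j| := Finset.abs_prod _ _
          _ = ∏ j ∈ e'.erase i, M := Finset.prod_congr rfl (fun j _ => habs j)
          _ = M ^ (k - 1) := by
              rw [Finset.prod_const, hcard_erase e' he'.1 i he'.2]
      have hsum : ∑ e' ∈ S, ∏ j ∈ e'.erase i, x j = ∑ e' ∈ S, M ^ (k - 1) := by
        rw [← heq i, Finset.sum_const, hdeg, nsmul_eq_mul]
        congr 1
        rw [← Even.pow_abs hkeven, habs i]
      exact (Finset.sum_eq_sum_iff_of_le hbound).mp hsum e (Finset.mem_filter.mpr ⟨he, hie⟩)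
    -- Step 3: each edge is x-constant
    have hC : ∀ e ∈ E, (∃ i ∈ e, x i = x i0) → ∀ j ∈ e, x j = x i0 := by
      rintro e he ⟨i, hie, hi⟩ j hje
      have h1 : x i * M ^ (k - 1) = ∏ l ∈ e, x l := by
        rw [← hB i e he hie, Finset.mul_prod_erase _ _ hie]
      have h2 : x j * M ^ (k - 1) = ∏ l ∈ e, x l := by
        rw [← hB j e he hje, Finset.mul_prod_erase _ _ hje]
      have hMk : (M : ℝ) ^ (k - 1) ≠ 0 := by positivity
      have hxij : x i = x j := mul_right_cancel₀ hMk (h1.trans h2.symm)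
      rw [← hxij, hi]
    have hconst : ∀ v, x v = x i0 := propagate_aux hconn _ hC rfl
    refine ⟨x i0, ?_, hconst⟩
    intro h0
    have h1 := habs i0
    rw [h0, abs_zero] at h1
    exact absurd h1 (ne_of_lt hMpos)
  · rintro ⟨γ, hγ, hxγ⟩
    constructor
    · intro h0
      apply hγ
      rw [← hxγ ⟨0, hn0⟩, h0]; rfl
    · intro i
      unfold lapR
      have : ∀ e ∈ E.filter (fun e => i ∈ e), ∏ j ∈ e.erase i, x j = γ ^ (k - 1) := by
        intro e he
        rw [Finset.mem_filter] at he
        calc ∏ j ∈ e.erase i, x j = ∏ j ∈ e.erase i, γ :=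
              Finset.prod_congr rfl (fun j _ => hxγ j)
          _ = γ ^ (k - 1) := by rw [Finset.prod_const, hcard_erase e he.1 i he.2]
      rw [Finset.sum_congr rfl this, Finset.sum_const, hdeg, nsmul_eq_mul, hxγ i]
      ring
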